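/- For square-integrable functions g, h : [a, b] → ℝ, define Φg and Φh by (Φg)(x) = p_i(u_i⁻¹(x)) + d_i · g(u_i⁻¹(x)) for x ∈ [x_{i−1}, x_i) (i = 1, …, N−1) and for x ∈ [x_{N−1}, x_N]. Then ∫_a^b (Φg − Φh)² dx = Σ_{i=1}^{N} d_i² · a_i · ∫_a^b (g − h)² dx, where a_i = (x_i − x_{i−1})/(b − a). In particular, ‖Φg − Φh‖_{L²[a,b]} ≤ (max_{1 ≤ i ≤ N} |d_i|) · ‖g − h‖_{L²[a,b]}. -/

import Mathlib

open MeasureTheory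

/-- For square-integrable `g, h` on `[a, b]`,
`∫_a^b (Φg − Φh)² = Σᵢ dᵢ² aᵢ ∫_a^b (g − h)²`, and consequently
`‖Φg − Φh‖_{L²} ≤ (maxᵢ |dᵢ|) ‖g − h‖_{L²}`. -/
theorem Phi_L2_contraction
    (a b : ℝ) (hab : a < b) (N : ℕ) (hN : 2 ≤ N)
    (x y : ℕ → ℝ) (hxa : x 0 = a) (hxb : x N = b)
    (hmono : ∀ j, j < N → x j < x (j + 1))
    (d : ℕ → ℝ) (g h : ℝ → ℝ)
    (hg : MemLp g 2 (volume.restrict (Set.Icc a b)))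
    (hh : MemLp h 2 (volume.restrict (Set.Icc a b))) :
    let ai : ℕ → ℝ := fun i => (x i - x (i - 1)) / (b - a)
    let ci : ℕ → ℝ := fun i => (y i - y (i - 1) - d i * (y N - y 0)) / (b - a)
    let ei : ℕ → ℝ := fun i => (b * x (i - 1) - a * x i) / (b - a)
    let fi : ℕ → ℝ := fun i => (b * y (i - 1) - a * y i - d i * (b * y 0 - a * y N)) / (b - a)
    let uinv : ℕ → ℝ → ℝ := fun i t => (t - ei i) / ai i
    let p : ℕ → ℝ → ℝ := fun i t => ci i * t + fi i
    ∀ Φg Φh : ℝ → ℝ,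
      (∀ i, 1 ≤ i → i ≤ N - 1 → ∀ t ∈ Set.Ico (x (i - 1)) (x i),
        Φg t = p i (uinv i t) + d i * g (uinv i t)) →
      (∀ t ∈ Set.Icc (x (N - 1)) (x N),
        Φg t = p N (uinv N t) + d N * g (uinv N t)) →
      (∀ i, 1 ≤ i → i ≤ N - 1 → ∀ t ∈ Set.Ico (x (i - 1)) (x i),
        Φh t = p i (uinv i t) + d i * h (uinv i t)) →
      (∀ t ∈ Set.Icc (x (N - 1)) (x N),
        Φh t = p N (uinv N t) + d N * h (uinv N t)) →
      ((∫ t in a..b, (Φg t - Φh t) ^ 2) =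
        ∑ i ∈ Finset.Icc 1 N, (d i) ^ 2 * ai i * ∫ t in a..b, (g t - h t) ^ 2) ∧
      Real.sqrt (∫ t in a..b, (Φg t - Φh t) ^ 2) ≤
        ((Finset.Icc 1 N).sup' (Finset.nonempty_Icc.mpr (by omega)) fun i => |d i|) *
          Real.sqrt (∫ t in a..b, (g t - h t) ^ 2) := by
  intro ai ci ei fi uinv p Φg Φh hG1 hG2 hH1 hH2
  have hba : (0:ℝ) < b - a := sub_pos.2 hab
  have hba' : b - a ≠ 0 := ne_of_gt hba
  set q : ℝ → ℝ := fun t => (g t - h t) ^ 2 with hqdef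
  set I : ℝ := ∫ t in a..b, (g t - h t) ^ 2 with hIdef
  have hIq : I = ∫ t in a..b, q t := rfl
  -- q is interval integrable on [a, b]
  have hqint : IntervalIntegrable q volume a b := by
    have h1 : IntegrableOn q (Set.Icc a b) volume := by
      have := (hg.sub hh).integrable_sq
      simpa [Pi.sub_apply, IntegrableOn] using this
    exact (intervalIntegrable_iff_integrableOn_Ioc_of_le hab.le).mpr
      (h1.mono_set Set.Ioc_subset_Icc_self)
  -- pointwise difference on the open pieces
  have hdiff : ∀ k, k < N → ∀ t ∈ Set.Ioo (x k) (x (k + 1)),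
      Φg t - Φh t = d (k + 1) * (g (uinv (k + 1) t) - h (uinv (k + 1) t)) := by
    intro k hk t ht
    by_cases hkN : k + 1 = N
    · have hN1 : N - 1 = k := by omega
      have htm : t ∈ Set.Icc (x (N - 1)) (x N) := by
        rw [hN1, ← hkN]; exact ⟨ht.1.le, ht.2.le⟩
      rw [hG2 t htm, hH2 t htm, ← hkN]
      ring
    · have h1 : 1 ≤ k + 1 := by omega
      have h2 : k + 1 ≤ N - 1 := by omega
      have htm : t ∈ Set.Ico (x (k + 1 - 1)) (x (k + 1)) := by
        simp only [Nat.add_sub_cancel]; exact ⟨ht.1.le, ht.2⟩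
      rw [hG1 (k + 1) h1 h2 t htm, hH1 (k + 1) h1 h2 t htm]
      ring
  -- per-piece integrability and value
  have key : ∀ k, k < N →
      IntervalIntegrable (fun t => (Φg t - Φh t) ^ 2) volume (x k) (x (k + 1)) ∧
      (∫ t in x k..x (k + 1), (Φg t - Φh t) ^ 2) = d (k + 1) ^ 2 * ai (k + 1) * I := by
    intro k hk
    have hx : x k < x (k + 1) := hmono k hk
    have hxne : x (k + 1) - x k ≠ 0 := ne_of_gt (sub_pos.2 hx)
    have haival : ai (k + 1) = (x (k + 1) - x k) / (b - a) := rfl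
    have heival : ei (k + 1) = (b * x k - a * x (k + 1)) / (b - a) := rfl
    have hai0 : ai (k + 1) ≠ 0 := by
      rw [haival]; exact div_ne_zero hxne hba'
    have huinv : ∀ t, uinv (k + 1) t = t / ai (k + 1) - ei (k + 1) / ai (k + 1) :=
      fun t => sub_div _ _ _
    have hea : x k / ai (k + 1) - ei (k + 1) / ai (k + 1) = a := by
      rw [haival, heival]; field_simp; ring
    have heb : x (k + 1) / ai (k + 1) - ei (k + 1) / ai (k + 1) = b := by
      rw [haival, heival]; field_simp; ring
    -- a.e. equality of the integrands on the piece
    have haeq : ∀ᵐ t ∂volume, t ∈ Set.Ioc (x k) (x (k + 1)) →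
        (Φg t - Φh t) ^ 2 =
          d (k + 1) ^ 2 * q (t / ai (k + 1) - ei (k + 1) / ai (k + 1)) := by
      have hne : ∀ᵐ t ∂(volume : Measure ℝ), t ≠ x (k + 1) := by
        rw [ae_iff]
        have : {t : ℝ | ¬ t ≠ x (k + 1)} = {x (k + 1)} := by ext t; simp
        rw [this]; exact measure_singleton _
      filter_upwards [hne] with t ht htm
      have hIoo : t ∈ Set.Ioo (x k) (x (k + 1)) := ⟨htm.1, lt_of_le_of_ne htm.2 ht⟩
      rw [hdiff k hk t hIoo, ← huinv t]
      show _ = d (k + 1) ^ 2 * (g (uinv (k + 1) t) - h (uinv (k + 1) t)) ^ 2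
      ring
    -- integrability of the substituted function
    have hqc : IntervalIntegrable
        (fun t => q (t / ai (k + 1) - ei (k + 1) / ai (k + 1))) volume (x k) (x (k + 1)) := by
      have h1 := (hqint.comp_sub_right (ei (k + 1) / ai (k + 1))).comp_mul_left (c := (ai (k + 1))⁻¹)
      have h2 : IntervalIntegrable
          (fun t => q (t / ai (k + 1) - ei (k + 1) / ai (k + 1))) volume
          ((a + ei (k + 1) / ai (k + 1)) / (ai (k + 1))⁻¹)
          ((b + ei (k + 1) / ai (k + 1)) / (ai (k + 1))⁻¹) := by
        refine h1.congr_ae (Filter.Eventually.of_forall fun t => ?_)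
        simp only [div_eq_inv_mul]
      have hea' : (a + ei (k + 1) / ai (k + 1)) / (ai (k + 1))⁻¹ = x k := by
        rw [haival, heival]; field_simp; ring
      have heb' : (b + ei (k + 1) / ai (k + 1)) / (ai (k + 1))⁻¹ = x (k + 1) := by
        rw [haival, heival]; field_simp; ring
      rwa [hea', heb'] at h2
    have hdqc : IntervalIntegrable
        (fun t => d (k + 1) ^ 2 * q (t / ai (k + 1) - ei (k + 1) / ai (k + 1))) volume
        (x k) (x (k + 1)) := hqc.const_mul _
    have hΦint : IntervalIntegrable (fun t => (Φg t - Φh t) ^ 2) volume (x k) (x (k + 1)) := by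
      refine hdqc.congr_ae ?_
      rw [Set.uIoc_of_le hx.le, Filter.EventuallyEq, ae_restrict_iff' measurableSet_Ioc]
      filter_upwards [haeq] with t ht htm
      exact (ht htm).symm
    refine ⟨hΦint, ?_⟩
    have step1 : (∫ t in x k..x (k + 1), (Φg t - Φh t) ^ 2) =
        ∫ t in x k..x (k + 1), d (k + 1) ^ 2 *
          q (t / ai (k + 1) - ei (k + 1) / ai (k + 1)) := by
      apply intervalIntegral.integral_congr_ae
      rw [Set.uIoc_of_le hx.le]
      exact haeq
    rw [step1, intervalIntegral.integral_const_mul]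
    have step2 : (∫ t in x k..x (k + 1), q (t / ai (k + 1) - ei (k + 1) / ai (k + 1))) =
        ai (k + 1) • ∫ t in a..b, q t := by
      rw [intervalIntegral.integral_comp_div_sub q hai0 (ei (k + 1) / ai (k + 1)),
        hea, heb]
    rw [step2, smul_eq_mul, ← hIq]
    ring
  -- sum over the pieces
  have hsplit : (∫ t in a..b, (Φg t - Φh t) ^ 2) =
      ∑ k ∈ Finset.range N, ∫ t in x k..x (k + 1), (Φg t - Φh t) ^ 2 := by
    rw [intervalIntegral.sum_integral_adjacent_intervals fun k hk => (key k hk).1, hxa, hxb]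
  have hIcc : ∀ f : ℕ → ℝ, ∑ i ∈ Finset.Icc 1 N, f i = ∑ k ∈ Finset.range N, f (1 + k) := by
    intro f
    rw [← Finset.Ico_add_one_right_eq_Icc, Finset.sum_Ico_eq_sum_range]
    simp
  have main : (∫ t in a..b, (Φg t - Φh t) ^ 2) =
      ∑ i ∈ Finset.Icc 1 N, d i ^ 2 * ai i * I := by
    rw [hsplit, hIcc fun i => d i ^ 2 * ai i * I]
    refine Finset.sum_congr rfl fun k hk => ?_
    rw [(key k (Finset.mem_range.mp hk)).2]
    norm_num [add_comm 1 k]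
  refine ⟨main, ?_⟩
  -- second part
  set M : ℝ := (Finset.Icc 1 N).sup' (Finset.nonempty_Icc.mpr (by omega)) fun i => |d i|
    with hMdef
  have h1N : 1 ∈ Finset.Icc 1 N := Finset.mem_Icc.mpr ⟨le_refl 1, by omega⟩
  have hM0 : 0 ≤ M := by
    refine le_trans (abs_nonneg (d 1)) ?_
    rw [hMdef]
    exact Finset.le_sup' (fun i => |d i|) h1N
  have hI0 : 0 ≤ I := intervalIntegral.integral_nonneg hab.le fun u _ => sq_nonneg _
  have hainn : ∀ i ∈ Finset.Icc 1 N, 0 ≤ ai i := by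
    intro i hi
    obtain ⟨hi1, hi2⟩ := Finset.mem_Icc.mp hi
    have : x (i - 1) < x i := by
      have h' := hmono (i - 1) (by omega)
      have hi' : i - 1 + 1 = i := by omega
      rwa [hi'] at h'
    exact div_nonneg (by linarith) hba.le
  have hsumai : ∑ i ∈ Finset.Icc 1 N, ai i = 1 := by
    rw [hIcc ai]
    have hval : ∀ k, ai (1 + k) = (x (k + 1) - x k) / (b - a) := by
      intro k
      show (x (1 + k) - x (1 + k - 1)) / (b - a) = _
      rw [add_comm 1 k, Nat.add_sub_cancel]
    simp_rw [hval, div_eq_mul_inv, ← Finset.sum_mul, Finset.sum_range_sub (fun k => x k),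
      hxa, hxb]
    field_simp
  have hbound : ∑ i ∈ Finset.Icc 1 N, d i ^ 2 * ai i * I ≤ M ^ 2 * I := by
    calc ∑ i ∈ Finset.Icc 1 N, d i ^ 2 * ai i * I
        ≤ ∑ i ∈ Finset.Icc 1 N, M ^ 2 * ai i * I := by
          refine Finset.sum_le_sum fun i hi => ?_
          have h1 : |d i| ≤ M := by
            rw [hMdef]; exact Finset.le_sup' (fun j => |d j|) hi
          have hd : d i ^ 2 ≤ M ^ 2 := by
            calc d i ^ 2 = |d i| ^ 2 := (sq_abs _).symm
              _ ≤ M ^ 2 := by nlinarith [abs_nonneg (d i)]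
          have := mul_nonneg (hainn i hi) hI0
          nlinarith
      _ = M ^ 2 * I := by
          simp_rw [mul_assoc, ← Finset.mul_sum, ← Finset.sum_mul, hsumai, one_mul]
  rw [main]
  calc Real.sqrt (∑ i ∈ Finset.Icc 1 N, d i ^ 2 * ai i * I)
      ≤ Real.sqrt (M ^ 2 * I) := Real.sqrt_le_sqrt hbound
    _ = M * Real.sqrt I := by
        rw [Real.sqrt_mul (sq_nonneg M), Real.sqrt_sq hM0]
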